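/- Mass action law form of the reaction rate: the quantity 𝒥₁ defined below equals k_b c₃ c₄ − k_f c₁ c₂, where the forward and backward rate constants are k_f = σ² √(8π k_B T/μ₁₂) exp(−ζ₁/(k_B T)) and k_b = σ² √(8π k_B T/μ₃₄) exp(−ζ₃/(k_B T)). In particular, (2k_B T/μ₁₂) Γ(2, ζ₁/(k_B T)) − (2ζ₁/μ₁₂) Γ(1, ζ₁/(k_B T)) = (2k_B T/μ₁₂) exp(−ζ₁/(k_B T)). -/

import Mathlib

noncomputable section

/-- The upper incomplete gamma function `Γ(η, x) = ∫_x^∞ t^{η−1} e^{−t} dt`. -/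
def iGamma (η x : ℝ) : ℝ := ∫ t in Set.Ioi x, t ^ (η - 1) * Real.exp (-t)

/-- Reduced mass. -/
def rmass (a b : ℝ) : ℝ := a * b / (a + b)

lemma iGamma_one (x : ℝ) : iGamma 1 x = Real.exp (-x) := by
  unfold iGamma
  simp only [sub_self, Real.rpow_zero, one_mul]
  exact integral_exp_neg_Ioi x

lemma iGamma_two (x : ℝ) (hx : 0 ≤ x) : iGamma 2 x = (x + 1) * Real.exp (-x) := by
  have hint : MeasureTheory.IntegrableOn (fun t : ℝ => t * Real.exp (-t)) (Set.Ioi x) := by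
    have h0 : MeasureTheory.IntegrableOn (fun t : ℝ => t * Real.exp (-t)) (Set.Ioi 0) := by
      have := integrableOn_rpow_mul_exp_neg_rpow (p := 1) (s := 1) (by norm_num) (by norm_num)
      refine this.congr_fun (fun t _ => ?_) measurableSet_Ioi
      norm_num
    exact h0.mono_set (Set.Ioi_subset_Ioi hx)
  have hderiv : ∀ t ∈ Set.Ici x, HasDerivAt (fun t : ℝ => -((t + 1) * Real.exp (-t)))
      (t * Real.exp (-t)) t := by
    intro t _
    have h1 : HasDerivAt (fun t : ℝ => t + 1) 1 t := (hasDerivAt_id t).add_const 1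
    have h2 : HasDerivAt (fun t : ℝ => Real.exp (-t)) (-Real.exp (-t)) t := by
      simpa using ((hasDerivAt_id t).neg).exp
    have : HasDerivAt (fun t : ℝ => -((t + 1) * Real.exp (-t)))
        (-(1 * Real.exp (-t) + (t + 1) * -Real.exp (-t))) t := (h1.mul h2).neg
    convert this using 1
    ring
  have htend : Filter.Tendsto (fun t : ℝ => -((t + 1) * Real.exp (-t))) Filter.atTop (nhds 0) := by
    have h1 := Real.tendsto_pow_mul_exp_neg_atTop_nhds_zero 1
    have h2 := Real.tendsto_pow_mul_exp_neg_atTop_nhds_zero 0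
    have := (h1.add h2).neg
    simp only [pow_one, pow_zero, one_mul, add_zero, neg_zero] at this ⊢
    convert this using 2 with t
    ring
  have key := MeasureTheory.integral_Ioi_of_hasDerivAt_of_tendsto' hderiv hint htend
  unfold iGamma
  have : (fun t : ℝ => t ^ ((2:ℝ) - 1) * Real.exp (-t)) = fun t : ℝ => t * Real.exp (-t) := by
    funext t
    norm_num
  rw [this, key]
  ring

/-- Mass action law form of the reaction rate:
`𝒥₁ = k_b c₃c₄ − k_f c₁c₂` with the forward and backward rate constants
`k_f = σ²√(8πk_BT/μ₁₂)e^{−ζ₁/(k_BT)}` and `k_b = σ²√(8πk_BT/μ₃₄)e^{−ζ₃/(k_BT)}`;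
in particular the incomplete-gamma bracket collapses to
`(2k_BT/μ₁₂)e^{−ζ₁/(k_BT)}`. -/
theorem reaction_rate_mass_action_form
    (m1 m2 m3 m4 : ℝ) (hm1 : 0 < m1) (hm2 : 0 < m2) (hm3 : 0 < m3) (hm4 : 0 < m4)
    (hM : m1 + m2 = m3 + m4)
    (QR σ T kB : ℝ) (hσ : 0 < σ) (hT : 0 < T) (hkB : 0 < kB)
    (ζ1 ζ3 : ℝ) (hζ1 : max 0 QR ≤ ζ1) (hζ3 : ζ3 = ζ1 - QR)
    (c1 c2 c3 c4 : ℝ) (hc1 : 0 ≤ c1) (hc2 : 0 ≤ c2) (hc3 : 0 ≤ c3) (hc4 : 0 ≤ c4)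
    (J1 kf kb : ℝ)
    (hJ1 : J1 = σ ^ 2 * Real.sqrt (2 * Real.pi * rmass m1 m2 / (kB * T)) *
      (Real.sqrt (rmass m1 m2 / rmass m3 m4) * (c3 * c4) * Real.exp (QR / (kB * T))
        - c1 * c2) *
      ((2 * kB * T / rmass m1 m2) * iGamma 2 (ζ1 / (kB * T))
        - (2 * ζ1 / rmass m1 m2) * iGamma 1 (ζ1 / (kB * T))))
    (hkf : kf = σ ^ 2 * Real.sqrt (8 * Real.pi * kB * T / rmass m1 m2) *
      Real.exp (-ζ1 / (kB * T)))
    (hkb : kb = σ ^ 2 * Real.sqrt (8 * Real.pi * kB * T / rmass m3 m4) *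
      Real.exp (-ζ3 / (kB * T))) :
    J1 = kb * (c3 * c4) - kf * (c1 * c2) ∧
    (2 * kB * T / rmass m1 m2) * iGamma 2 (ζ1 / (kB * T))
        - (2 * ζ1 / rmass m1 m2) * iGamma 1 (ζ1 / (kB * T))
      = (2 * kB * T / rmass m1 m2) * Real.exp (-ζ1 / (kB * T)) := by
  have hkT : 0 < kB * T := mul_pos hkB hT
  have hζ1' : 0 ≤ ζ1 := le_trans (le_max_left 0 QR) hζ1
  have hz : 0 ≤ ζ1 / (kB * T) := div_nonneg hζ1' hkT.le
  have hμ12 : 0 < rmass m1 m2 := div_pos (mul_pos hm1 hm2) (by linarith)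
  have hμ34 : 0 < rmass m3 m4 := div_pos (mul_pos hm3 hm4) (by linarith)
  have hπ := Real.pi_pos
  -- the bracket identity
  have hbr : (2 * kB * T / rmass m1 m2) * iGamma 2 (ζ1 / (kB * T))
        - (2 * ζ1 / rmass m1 m2) * iGamma 1 (ζ1 / (kB * T))
      = (2 * kB * T / rmass m1 m2) * Real.exp (-ζ1 / (kB * T)) := by
    rw [iGamma_two _ hz, iGamma_one]
    have : -(ζ1 / (kB * T)) = -ζ1 / (kB * T) := by ring
    rw [this]
    field_simp
    ring
  refine ⟨?_, hbr⟩
  -- sqrt identities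
  have hs1 : Real.sqrt (2 * Real.pi * rmass m1 m2 / (kB * T)) * (2 * kB * T / rmass m1 m2)
      = Real.sqrt (8 * Real.pi * kB * T / rmass m1 m2) := by
    rw [show (8 : ℝ) * Real.pi * kB * T / rmass m1 m2
        = (2 * Real.pi * rmass m1 m2 / (kB * T)) * (2 * kB * T / rmass m1 m2) ^ 2 by
      field_simp; ring]
    rw [Real.sqrt_mul (by positivity), Real.sqrt_sq (by positivity)]
  have hs2 : Real.sqrt (rmass m1 m2 / rmass m3 m4) *
        Real.sqrt (8 * Real.pi * kB * T / rmass m1 m2)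
      = Real.sqrt (8 * Real.pi * kB * T / rmass m3 m4) := by
    rw [← Real.sqrt_mul (by positivity)]
    congr 1
    field_simp
  have hexp : Real.exp (QR / (kB * T)) * Real.exp (-ζ1 / (kB * T))
      = Real.exp (-ζ3 / (kB * T)) := by
    rw [← Real.exp_add, hζ3]
    congr 1
    ring
  rw [hJ1, hbr, hkf, hkb, ← hs2, ← hs1, ← hexp]
  ring
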